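/- For every real number c > 0, the integral over (1,∞) of 2·(1 − 1/s)·exp(−c·s)·s/(s+1) with respect to s equals (2/c)·exp(−c) − 4·exp(c)·∫_1^∞ exp(−2·c·s)/s ds. -/

import Mathlib

open MeasureTheory Real

lemma integrableOn_exp_div_add (c a : ℝ) (hc : 0 < c) (ha : 0 ≤ a) :
    IntegrableOn (fun s : ℝ => Real.exp (-c * s) / (s + a)) (Set.Ioi 1) := by
  refine Integrable.mono (exp_neg_integrableOn_Ioi 1 hc) ?_ ?_
  · apply Measurable.aestronglyMeasurable
    exact (measurable_id.const_mul (-c)).exp.div (measurable_id.add_const a)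
  · filter_upwards [ae_restrict_mem measurableSet_Ioi] with s hs
    have hs1 : (1 : ℝ) < s := hs
    have hsa : (1 : ℝ) ≤ s + a := by linarith
    rw [Real.norm_eq_abs, Real.norm_eq_abs, abs_div, abs_of_nonneg (Real.exp_pos _).le,
      abs_of_pos (by linarith : (0:ℝ) < s + a)]
    calc Real.exp (-c * s) / (s + a) ≤ Real.exp (-c * s) / 1 :=
          div_le_div_of_nonneg_left (Real.exp_pos _).le one_pos hsa
      _ = Real.exp (-c * s) := div_one _

/-- Equation (IoEllNegEqn): the archimedean integral `I^o(ℓ,η)` for `ℓ < 0`. -/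
theorem Io_integral_neg (c : ℝ) (hc : 0 < c) :
    (∫ s in Set.Ioi (1 : ℝ), 2 * (1 - 1 / s) * Real.exp (-c * s) * s / (s + 1))
      = (2 / c) * Real.exp (-c)
        - 4 * Real.exp c * ∫ s in Set.Ioi (1 : ℝ), Real.exp (-(2 * c) * s) / s := by
  set g : ℝ → ℝ := fun u => Real.exp (-c * u) / (u + 1) with hg
  -- Step 1: rewrite the integrand
  have step1 : (∫ s in Set.Ioi (1 : ℝ), 2 * (1 - 1 / s) * Real.exp (-c * s) * s / (s + 1))
      = ∫ s in Set.Ioi (1 : ℝ), (2 * Real.exp (-c * s) - 4 * g s) := by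
    refine setIntegral_congr_fun measurableSet_Ioi fun s hs => ?_
    have hs1 : (1 : ℝ) < s := hs
    have hs0 : s ≠ 0 := by linarith
    have hs1' : s + 1 ≠ 0 := by linarith
    simp only [hg]
    field_simp
    ring
  have hexp : IntegrableOn (fun s : ℝ => Real.exp (-c * s)) (Set.Ioi 1) :=
    exp_neg_integrableOn_Ioi 1 hc
  have hgint : IntegrableOn g (Set.Ioi 1) := integrableOn_exp_div_add c 1 hc zero_le_one
  -- Step 2: split the integral
  have step2 : (∫ s in Set.Ioi (1 : ℝ), (2 * Real.exp (-c * s) - 4 * g s))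
      = 2 * (∫ s in Set.Ioi (1 : ℝ), Real.exp (-c * s)) - 4 * ∫ s in Set.Ioi (1 : ℝ), g s := by
    rw [integral_sub (hexp.const_mul 2) (hgint.const_mul 4), integral_const_mul, integral_const_mul]
  -- Step 3: the exponential integral
  have step3 : (∫ s in Set.Ioi (1 : ℝ), Real.exp (-c * s)) = Real.exp (-c) / c := by
    have := integral_comp_mul_left_Ioi (fun x : ℝ => Real.exp (-x)) 1 hc
    simp only [mul_one, smul_eq_mul] at this
    rw [show (fun s : ℝ => Real.exp (-c * s)) = fun s : ℝ => Real.exp (-(c * s)) by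
      funext s; rw [neg_mul]]
    rw [this, integral_exp_neg_Ioi]
    field_simp
  -- Step 4: change of variables for the second integral
  have step4 : (∫ s in Set.Ioi (1 : ℝ), Real.exp (-(2 * c) * s) / s)
      = Real.exp (-c) * ∫ s in Set.Ioi (1 : ℝ), g s := by
    have hf : ContinuousOn (fun t : ℝ => 2 * t - 1) (Set.Ici 1) := by fun_prop
    have hft : Filter.Tendsto (fun t : ℝ => 2 * t - 1) Filter.atTop Filter.atTop := by
      apply Filter.tendsto_atTop_atTop.mpr
      intro b
      exact ⟨(b + 1) / 2, fun a ha => by linarith⟩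
    have hff' : ∀ x ∈ Set.Ioi (1 : ℝ),
        HasDerivWithinAt (fun t : ℝ => 2 * t - 1) 2 (Set.Ioi x) x := by
      intro x _
      simpa using (((hasDerivAt_id x).const_mul 2).sub_const 1).hasDerivWithinAt
    have himg : (fun t : ℝ => 2 * t - 1) '' Set.Ioi 1 ⊆ Set.Ioi 1 := by
      rintro _ ⟨t, ht, rfl⟩
      have h1 : (1:ℝ) < t := ht
      simp only [Set.mem_Ioi]; linarith
    have himg' : (fun t : ℝ => 2 * t - 1) '' Set.Ici 1 ⊆ Set.Ici 1 := by
      rintro _ ⟨t, ht, rfl⟩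
      have h1 : (1:ℝ) ≤ t := ht
      simp only [Set.mem_Ici]; linarith
    have hg_cont : ContinuousOn g ((fun t : ℝ => 2 * t - 1) '' Set.Ioi 1) := by
      refine ContinuousOn.mono (s := Set.Ioi 1) ?_ himg
      refine ContinuousOn.div (by fun_prop) (by fun_prop) ?_
      intro x hx
      have h1 : (1:ℝ) < x := hx
      intro h; linarith
    have hgIci : IntegrableOn g (Set.Ici 1) := by
      rwa [integrableOn_Ici_iff_integrableOn_Ioi]
    have hg1 : IntegrableOn g ((fun t : ℝ => 2 * t - 1) '' Set.Ici 1) :=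
      hgIci.mono_set himg'
    have funeq : ∀ t : ℝ, t ∈ Set.Ici (1:ℝ) →
        g (2 * t - 1) * 2 = Real.exp c * (Real.exp (-(2*c) * t) / t) := by
      intro t ht
      have ht1 : (1:ℝ) ≤ t := ht
      have ht0 : t ≠ 0 := by linarith
      simp only [hg]
      have h2t : 2 * t - 1 + 1 = 2 * t := by ring
      rw [h2t, show -c * (2 * t - 1) = c + -(2*c) * t by ring, Real.exp_add]
      field_simp
    have hg2 : IntegrableOn (fun x => (g ∘ (fun t : ℝ => 2 * t - 1)) x * 2) (Set.Ici 1) := by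
      have key : IntegrableOn (fun t : ℝ => Real.exp c * (Real.exp (-(2*c) * t) / t))
          (Set.Ici 1) := by
        rw [integrableOn_Ici_iff_integrableOn_Ioi]
        have h0 := integrableOn_exp_div_add (2*c) 0 (by linarith) le_rfl
        have h1 := h0.const_mul (Real.exp c)
        simp at h1 ⊢
        exact h1
      exact key.congr_fun (fun t ht => (funeq t ht).symm) measurableSet_Ici
    have key := integral_comp_mul_deriv_Ioi hf hft hff' hg_cont hg1 hg2
    simp only [Function.comp, mul_one] at key
    norm_num at key
    have lhs_eq : (∫ x in Set.Ioi (1:ℝ), g (2 * x - 1) * 2)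
        = Real.exp c * ∫ x in Set.Ioi (1:ℝ), Real.exp (-(2*c) * x) / x := by
      rw [← integral_const_mul]
      exact setIntegral_congr_fun measurableSet_Ioi fun t ht =>
        funeq t (Set.Ioi_subset_Ici_self ht)
    rw [lhs_eq] at key
    rw [← key, ← mul_assoc, ← Real.exp_add, neg_add_cancel, Real.exp_zero, one_mul]
  rw [step1, step2, step3, step4]
  have hcc : Real.exp c * Real.exp (-c) = 1 := by
    rw [← Real.exp_add, add_neg_cancel, Real.exp_zero]
  linear_combination (4 * (∫ s in Set.Ioi (1:ℝ), g s)) * hcc
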